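/- Let d, R ∈ ℕ with R ≥ 1, let C_0, …, C_R be d×d complex matrices such that the polynomial z ↦ det(Σ_{n=0}^R z^{R−n} C_n) is not identically zero (the matrix pencil is regular), and let γ : ℕ → ℂ^d be a bounded sequence satisfying Σ_{n=0}^R C_n · γ(r+n) = 0 for all r ∈ ℕ. Then the generating function of each component is rational: for each index j there exist polynomials P_j, Q ∈ ℂ[z] with Q not identically zero such that Q(z) · Σ_{r=0}^∞ γ(r)_j z^r = P_j(z) for all z with |z| < 1. -/

import Mathlib

open scoped BigOperators
open Polynomial

theorem matrix_difference_generating_function_rational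
    (d R : ℕ) (hR : 1 ≤ R)
    (C : Fin (R + 1) → Matrix (Fin d) (Fin d) ℂ)
    (hreg : ∃ z : ℂ, (∑ n : Fin (R + 1), z ^ (R - (n : ℕ)) • C n).det ≠ 0)
    (γ : ℕ → (Fin d → ℂ))
    (hbdd : ∃ M : ℝ, ∀ r : ℕ, ‖γ r‖ ≤ M)
    (hrec : ∀ r : ℕ, ∑ n : Fin (R + 1), (C n).mulVec (γ (r + n)) = 0) :
    ∀ j : Fin d, ∃ P Q : Polynomial ℂ, Q ≠ 0 ∧
      ∀ z : ℂ, ‖z‖ < 1 →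
        Q.eval z * (∑' r : ℕ, γ r j * z ^ r) = P.eval z := by
  obtain ⟨M, hM⟩ := hbdd
  intro j
  set M' : ℝ := max M 0 with hM'def
  have hM' : ∀ r, ‖γ r‖ ≤ M' := fun r => le_trans (hM r) (le_max_left _ _)
  have hM'0 : (0 : ℝ) ≤ M' := le_max_right _ _
  set L : Matrix (Fin d) (Fin d) ℂ[X] :=
    ∑ n : Fin (R + 1), ((X : ℂ[X]) ^ (R - (n : ℕ))) • (C n).map Polynomial.C with hLdef
  set Φ : Fin d → ℂ[X] := fun i =>
    ∑ m ∈ Finset.range R, ∑ n : Fin (R + 1),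
      if m < R - (n : ℕ) then 0
      else Polynomial.C ((C n).mulVec (γ (m - (R - (n : ℕ)))) i) * (X : ℂ[X]) ^ m with hΦdef
  have hLmap : ∀ z : ℂ, L.map (eval z) = ∑ n : Fin (R + 1), z ^ (R - (n : ℕ)) • C n := by
    intro z
    ext i k
    simp [hLdef, Matrix.map_apply, Matrix.sum_apply, Matrix.smul_apply, eval_finset_sum,
      smul_eq_mul]
    exact Finset.sum_congr rfl fun x _ => mul_comm _ _
  refine ⟨(L.adjugate.mulVec Φ) j, L.det, ?_, ?_⟩
  · intro hdet
    obtain ⟨z0, hz0⟩ := hreg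
    apply hz0
    rw [← hLmap z0]
    have hmd : (L.map (eval z0)).det = eval z0 L.det := ((evalRingHom z0).map_det L).symm
    rw [hmd, hdet]
    simp
  intro z hz
  set A : Matrix (Fin d) (Fin d) ℂ := ∑ n : Fin (R + 1), z ^ (R - (n : ℕ)) • C n with hAdef
  set g : Fin d → ℂ := fun k => ∑' r : ℕ, γ r k * z ^ r with hgdef
  have hzsum : Summable (fun m : ℕ => ‖z‖ ^ m) :=
    summable_geometric_of_lt_one (norm_nonneg z) hz
  have hgsum : ∀ k : Fin d, Summable (fun r : ℕ => γ r k * z ^ r) := by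
    intro k
    refine Summable.of_norm_bounded (hzsum.mul_left M') (fun r => ?_)
    rw [norm_mul, norm_pow]
    exact mul_le_mul_of_nonneg_right (le_trans (norm_le_pi_norm (γ r) k) (hM' r))
      (by positivity)
  -- Step 1: analytic identity A ⬝ g = eval z ∘ Φ
  have step1 : A.mulVec g = fun i => eval z (Φ i) := by
    funext i
    set F : Fin (R + 1) → ℕ → ℂ := fun n m =>
      if m < R - (n : ℕ) then 0 else ((C n).mulVec (γ (m - (R - (n : ℕ)))) i) * z ^ m
      with hFdef
    have hbound : ∀ (n : Fin (R + 1)) (r : ℕ),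
        ‖(C n).mulVec (γ r) i‖ ≤ (∑ k, ‖C n i k‖) * M' := by
      intro n r
      simp only [Matrix.mulVec, dotProduct]
      calc ‖∑ k, C n i k * γ r k‖ ≤ ∑ k, ‖C n i k * γ r k‖ := norm_sum_le _ _
        _ ≤ ∑ k, ‖C n i k‖ * M' := by
            refine Finset.sum_le_sum fun k _ => ?_
            rw [norm_mul]
            exact mul_le_mul_of_nonneg_left
              (le_trans (norm_le_pi_norm (γ r) k) (hM' r)) (norm_nonneg _)
        _ = (∑ k, ‖C n i k‖) * M' := (Finset.sum_mul _ _ _).symm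
    have hFsum : ∀ n : Fin (R + 1), Summable (F n) := by
      intro n
      refine Summable.of_norm_bounded (hzsum.mul_left ((∑ k, ‖C n i k‖) * M'))
        (fun m => ?_)
      by_cases hm : m < R - (n : ℕ)
      · simp only [hFdef, hm, if_true, norm_zero]
        positivity
      · simp only [hFdef, hm, if_false]
        rw [norm_mul, norm_pow]
        exact mul_le_mul_of_nonneg_right (hbound n _) (by positivity)
    have key1 : ∀ n : Fin (R + 1),
        z ^ (R - (n : ℕ)) * ((C n).mulVec g i) = ∑' m, F n m := by
      intro n
      have e1 : (C n).mulVec g i = ∑' r, ((C n).mulVec (γ r) i) * z ^ r := by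
        simp only [Matrix.mulVec, dotProduct, hgdef]
        calc ∑ k, C n i k * ∑' r, γ r k * z ^ r
            = ∑ k, ∑' r, C n i k * (γ r k * z ^ r) :=
              Finset.sum_congr rfl fun k _ => (tsum_mul_left).symm
          _ = ∑' r, ∑ k, C n i k * (γ r k * z ^ r) :=
              (Summable.tsum_finsetSum (fun k _ => (hgsum k).mul_left _)).symm
          _ = ∑' r, (∑ k, C n i k * γ r k) * z ^ r := by
              refine tsum_congr fun r => ?_
              rw [Finset.sum_mul]
              exact Finset.sum_congr rfl fun k _ => (mul_assoc _ _ _).symm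
      rw [e1, ← tsum_mul_left]
      have e2 : ∀ r : ℕ,
          z ^ (R - (n : ℕ)) * (((C n).mulVec (γ r) i) * z ^ r)
            = F n (r + (R - (n : ℕ))) := by
        intro r
        have h1 : ¬ (r + (R - (n : ℕ)) < R - (n : ℕ)) := by omega
        simp only [hFdef, h1, if_false, Nat.add_sub_cancel]
        ring
      rw [tsum_congr e2, ← Summable.sum_add_tsum_nat_add (R - (n : ℕ)) (hFsum n),
        Finset.sum_eq_zero (fun m hm => by
          simp only [hFdef, Finset.mem_range.mp hm, if_true]), zero_add]
    have lhs_eq : A.mulVec g i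
        = ∑ n : Fin (R + 1), z ^ (R - (n : ℕ)) * ((C n).mulVec g i) := by
      simp only [hAdef, Matrix.mulVec, dotProduct, Matrix.sum_apply,
        Matrix.smul_apply, smul_eq_mul, Finset.sum_mul, Finset.mul_sum]
      rw [Finset.sum_comm]
      simp only [mul_assoc]
    have vanish : ∀ m ∉ Finset.range R, ∑ n : Fin (R + 1), F n m = 0 := by
      intro m hm
      have hmR : R ≤ m := le_of_not_gt (fun h => hm (Finset.mem_range.mpr h))
      have e3 : ∀ n : Fin (R + 1),
          F n m = ((C n).mulVec (γ ((m - R) + (n : ℕ))) i) * z ^ m := by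
        intro n
        have hn : (n : ℕ) ≤ R := Nat.lt_succ_iff.mp n.isLt
        have h1 : ¬ (m < R - (n : ℕ)) := by omega
        have h2 : m - (R - (n : ℕ)) = (m - R) + (n : ℕ) := by omega
        simp only [hFdef, h1, if_false, h2]
      rw [Finset.sum_congr rfl (fun n _ => e3 n), ← Finset.sum_mul]
      have h0 : ∑ n : Fin (R + 1), ((C n).mulVec (γ ((m - R) + (n : ℕ))) i) = 0 := by
        have := congrFun (hrec (m - R)) i
        simpa [Finset.sum_apply] using this
      rw [h0, zero_mul]
    have evalΦ : eval z (Φ i) = ∑ m ∈ Finset.range R, ∑ n : Fin (R + 1), F n m := by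
      simp only [hΦdef, eval_finset_sum]
      refine Finset.sum_congr rfl fun m _ => Finset.sum_congr rfl fun n _ => ?_
      by_cases h : m < R - (n : ℕ) <;> simp [hFdef, h]
    calc A.mulVec g i
        = ∑ n : Fin (R + 1), z ^ (R - (n : ℕ)) * ((C n).mulVec g i) := lhs_eq
      _ = ∑ n : Fin (R + 1), ∑' m, F n m := Finset.sum_congr rfl fun n _ => key1 n
      _ = ∑' m, ∑ n : Fin (R + 1), F n m := (Summable.tsum_finsetSum fun n _ => hFsum n).symm
      _ = ∑ m ∈ Finset.range R, ∑ n : Fin (R + 1), F n m := tsum_eq_sum vanish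
      _ = eval z (Φ i) := evalΦ.symm
  -- Step 2: algebraic identities
  have hdet : eval z L.det = A.det :=
    ((evalRingHom z).map_det L).trans
      (by show (L.map (eval z)).det = A.det; rw [hLmap z, hAdef])
  have hadj : A.adjugate = L.adjugate.map (eval z) := by
    rw [hAdef, ← hLmap z]
    exact ((evalRingHom z).map_adjugate L).symm
  have hgj : (∑' r : ℕ, γ r j * z ^ r) = g j := rfl
  rw [hgj, hdet]
  calc A.det * g j
      = (A.adjugate.mulVec (A.mulVec g)) j := by
        rw [Matrix.mulVec_mulVec, Matrix.adjugate_mul, Matrix.smul_mulVec,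
          Matrix.one_mulVec]
        simp
    _ = (A.adjugate.mulVec (fun i => eval z (Φ i))) j := by rw [step1]
    _ = eval z ((L.adjugate.mulVec Φ) j) := by
        rw [hadj]
        simp only [Matrix.mulVec, dotProduct, Matrix.map_apply, eval_finset_sum,
          eval_mul]
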